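/- arXiv:1811.10406 — 11 statements merged into one kernel-verified Lean document; each statement's English description precedes it below -/
import Mathlib

section
/- Let V be a real vector space and J : V → V a linear map with J² = p J + q I, where p² + 4q ≠ 0. Let A : V → V be any linear map satisfying A ∘ J + J ∘ A = p A. Define B := (1/(p² + 4q)) (2 J ∘ A − p A). Then J ∘ B − B ∘ J = A. (This is the algebraic identity underlying the fact that the metallic natural connection D = ∇ + (2/(p²+4q)) J(∇J) − (p/(p²+4q)) ∇J satisfies D J = 0, with A playing the role of ∇_X J.) -/
/-- If `J² = p J + q I` with `p² + 4q ≠ 0` and `A ∘ J + J ∘ A = p A`,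
then `B := (1/(p²+4q))(2 J ∘ A - p A)` satisfies `J ∘ B - B ∘ J = A`.
(Algebraic identity underlying `D J = 0` for the metallic natural connection.) -/
theorem metallic_natural_connection_DJ
    (V : Type*) [AddCommGroup V] [Module ℝ V]
    (J A : Module.End ℝ V) (p q : ℝ)
    (hJ : J ^ 2 = p • J + q • (1 : Module.End ℝ V))
    (hpq : p ^ 2 + 4 * q ≠ 0)
    (hA : A * J + J * A = p • A) :
    J * ((1 / (p ^ 2 + 4 * q)) • ((2 : ℝ) • (J * A) - p • A)) -
      ((1 / (p ^ 2 + 4 * q)) • ((2 : ℝ) • (J * A) - p • A)) * J = A := by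
  have hAJ : A * J = p • A - J * A := by rw [eq_sub_iff_add_eq]; exact hA
  have h2 : J * (J * A) = p • (J * A) + q • A := by
    have := congrArg (· * A) hJ
    simpa [sq, mul_assoc, add_mul, smul_mul_assoc] using this
  have key : J * ((2 : ℝ) • (J * A) - p • A) - ((2 : ℝ) • (J * A) - p • A) * J
      = (p ^ 2 + 4 * q) • A := by
    simp only [mul_sub, sub_mul, mul_smul_comm, smul_mul_assoc, hAJ, h2,
      smul_sub, smul_add, smul_smul, mul_assoc]
    module
  rw [mul_smul_comm, smul_mul_assoc, ← smul_sub, key, smul_smul,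
    one_div_mul_cancel hpq, one_smul]
end

section
/- Let V be a real vector space, g a symmetric bilinear form on V, and J : V → V a linear map with J² = p J + q I, where p² + 4q ≠ 0. Assume J is g-symmetric and let A : V → V be a linear map which is g-symmetric and satisfies A ∘ J + J ∘ A = p A. Define B := (1/(p² + 4q)) (2 J ∘ A − p A). Then B is g-skew-symmetric: g(B X, Y) + g(X, B Y) = 0 for all X, Y ∈ V. (This is the algebraic identity underlying the fact that the metallic natural connection D = ∇ + (2/(p²+4q)) J(∇J) − (p/(p²+4q)) ∇J satisfies D g = 0.) -/
/-- If `g` is a symmetric bilinear form, `J` is `g`-symmetric with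
`J² = p J + q I`, `p² + 4q ≠ 0`, and `A` is `g`-symmetric with `A ∘ J + J ∘ A = p A`,
then `B := (1/(p²+4q))(2 J ∘ A - p A)` is `g`-skew-symmetric.
(Algebraic identity underlying `D g = 0` for the metallic natural connection.) -/
theorem metallic_natural_connection_Dg
    (V : Type*) [AddCommGroup V] [Module ℝ V]
    (g : LinearMap.BilinForm ℝ V) (hgsymm : ∀ X Y : V, g X Y = g Y X)
    (J A : Module.End ℝ V) (p q : ℝ)
    (hJ : J ^ 2 = p • J + q • (1 : Module.End ℝ V))
    (hpq : p ^ 2 + 4 * q ≠ 0)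
    (hJsym : ∀ X Y : V, g (J X) Y = g X (J Y))
    (hAsym : ∀ X Y : V, g (A X) Y = g X (A Y))
    (hA : A * J + J * A = p • A) :
    ∀ X Y : V,
      g (((1 / (p ^ 2 + 4 * q)) • ((2 : ℝ) • (J * A) - p • A)) X) Y +
        g X (((1 / (p ^ 2 + 4 * q)) • ((2 : ℝ) • (J * A) - p • A)) Y) = 0 := by
  intro X Y
  have hAJ : A * J = p • A - J * A := by
    have := hA; rw [← this]; abel
  have hAJapp : ∀ Z : V, A (J Z) = p • A Z - J (A Z) := by
    intro Z
    have := congrArg (fun (T : Module.End ℝ V) => T Z) hAJ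
    simpa using this
  have h1 : g ((J * A) X) Y = g X (A (J Y)) := by
    have : g (J (A X)) Y = g (A X) (J Y) := hJsym _ _
    simpa [this] using hAsym X (J Y)
  simp only [LinearMap.smul_apply, LinearMap.sub_apply, Module.End.mul_apply,
    map_smul, map_sub, LinearMap.smul_apply, smul_eq_mul]
  have h2 : g ((J * A) X) Y = g X (A (J Y)) := h1
  simp only [Module.End.mul_apply] at h2
  have h3 : g (J (A Y)) X = g Y (A (J X)) := by
    have : g (J (A Y)) X = g (A Y) (J X) := hJsym _ _
    simpa [this] using hAsym Y (J X)
  have h4 : g Y (J (A X)) = p * g X (A Y) - g X (J (A Y)) := by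
    rw [← hJsym Y (A X), hgsymm (J Y) (A X), hAsym X (J Y), hAJapp Y]
    simp [smul_eq_mul]
  rw [h2, hAJapp Y, hgsymm X (J (A Y)), h3, hAJapp X]
  simp only [map_sub, map_smul, smul_eq_mul]
  rw [hgsymm Y (A X), hAsym X Y, h4]
  ring
end

section
/- Let V be a real vector space, g a symmetric bilinear form on V, and J : V → V a g-symmetric linear map with J² = p J + q I for real numbers p, q. Let ♭_g : V → V* be the map X ↦ g(X, ·) and J* : V* → V* the dual (transpose) of J. Define Ĵ : V ⊕ V* → V ⊕ V* by Ĵ(X, α) := (J X, ♭_g(X) − J*(α) + p α). Then Ĵ² = p Ĵ + q Id on V ⊕ V*. -/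
/-- If `J` is `g`-symmetric with `J² = p J + q I`, then
`Ĵ(X, α) := (J X, ♭_g X - J* α + p α)` satisfies `Ĵ² = p Ĵ + q Id` on `V ⊕ V*`. -/
theorem generalized_metallic_structure
    (V : Type*) [AddCommGroup V] [Module ℝ V]
    (g : LinearMap.BilinForm ℝ V) (hgsymm : ∀ X Y : V, g X Y = g Y X)
    (J : Module.End ℝ V)
    (hJsym : ∀ X Y : V, g (J X) Y = g X (J Y))
    (p q : ℝ) (hJ : J ^ 2 = p • J + q • (1 : Module.End ℝ V))
    (Jhat : V × Module.Dual ℝ V → V × Module.Dual ℝ V)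
    (hJhat : ∀ σ : V × Module.Dual ℝ V,
      Jhat σ = (J σ.1, g σ.1 - σ.2 ∘ₗ (J : V →ₗ[ℝ] V) + p • σ.2)) :
    ∀ σ : V × Module.Dual ℝ V, Jhat (Jhat σ) = p • Jhat σ + q • σ := by
  intro σ
  have hJ' : ∀ X : V, J (J X) = p • J X + q • X := by
    intro X
    have := congrFun (congrArg DFunLike.coe hJ) X
    simpa [pow_two, Module.End.mul_apply] using this
  rw [hJhat, hJhat σ]
  refine Prod.ext ?_ ?_
  · simpa using hJ' σ.1
  · ext Y
    simp only [Prod.snd_add, Prod.smul_snd, Prod.snd]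
    simp [hJ', hJsym, hgsymm σ.1 Y]
    ring
end

section
/- Let V be a finite-dimensional real vector space, g a nondegenerate symmetric bilinear form on V, and J : V → V a g-symmetric linear map with J² = p J + q I, where p² + 4q ≠ 0. Define Ĵ : V ⊕ V* → V ⊕ V* by Ĵ(X, α) := (J X, ♭_g(X) − J*(α) + p α), and define the symmetric bilinear form ĝ on V ⊕ V* by ĝ(X + α, Y + β) := g(X, Y) + g(♯_g α, ♯_g β) + (p/(p²+4q))(α(Y) + β(X)) − (2/(p²+4q))(α(J Y) + β(J X)). Then Ĵ is ĝ-symmetric: ĝ(Ĵ(X+α), Y+β) = ĝ(X+α, Ĵ(Y+β)) for all X, Y ∈ V and α, β ∈ V*. -/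
/-- On a finite-dimensional `V` with nondegenerate symmetric `g`
(with musical isomorphisms `♭_g = g ·` and its inverse `♯_g`), if `J` is
`g`-symmetric with `J² = p J + q I`, `p² + 4q ≠ 0`, then `Ĵ` is `ĝ`-symmetric
for the generalized metric `ĝ`. -/
theorem generalized_metallic_pseudoRiemannian
    (V : Type*) [AddCommGroup V] [Module ℝ V] [FiniteDimensional ℝ V]
    (g : LinearMap.BilinForm ℝ V) (hgsymm : ∀ X Y : V, g X Y = g Y X)
    (hgnd : ∀ X : V, (∀ Y : V, g X Y = 0) → X = 0)
    (sharp : Module.Dual ℝ V →ₗ[ℝ] V)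
    (hsharp_flat : ∀ X : V, sharp (g X) = X)
    (hflat_sharp : ∀ α : Module.Dual ℝ V, g (sharp α) = α)
    (J : Module.End ℝ V)
    (hJsym : ∀ X Y : V, g (J X) Y = g X (J Y))
    (p q : ℝ) (hJ : J ^ 2 = p • J + q • (1 : Module.End ℝ V))
    (hpq : p ^ 2 + 4 * q ≠ 0)
    (Jhat : V × Module.Dual ℝ V → V × Module.Dual ℝ V)
    (hJhat : ∀ σ : V × Module.Dual ℝ V,
      Jhat σ = (J σ.1, g σ.1 - σ.2 ∘ₗ (J : V →ₗ[ℝ] V) + p • σ.2))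
    (ghat : V × Module.Dual ℝ V → V × Module.Dual ℝ V → ℝ)
    (hghat : ∀ σ τ : V × Module.Dual ℝ V,
      ghat σ τ = g σ.1 τ.1 + g (sharp σ.2) (sharp τ.2) +
        (p / (p ^ 2 + 4 * q)) * (σ.2 τ.1 + τ.2 σ.1) -
        (2 / (p ^ 2 + 4 * q)) * (σ.2 (J τ.1) + τ.2 (J σ.1))) :
    ∀ σ τ : V × Module.Dual ℝ V, ghat (Jhat σ) τ = ghat σ (Jhat τ) := by

  intro σ τ
  obtain ⟨X, α⟩ := σ
  obtain ⟨Y, β⟩ := τ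
  have hcomp : ∀ a : V, (g a) ∘ₗ (J : V →ₗ[ℝ] V) = g (J a) := by
    intro a
    ext y
    simpa using (hJsym a y).symm
  have hJ2 : ∀ x : V, J (J x) = p • J x + q • x := by
    intro x
    have h := congrFun (congrArg (fun f : Module.End ℝ V => (f : V → V)) hJ) x
    simpa [pow_two, Module.End.mul_apply] using h
  rw [hghat, hghat, hJhat, hJhat]
  rw [← hflat_sharp α, ← hflat_sharp β]
  set a := sharp α with ha
  set b := sharp β with hb
  simp only [hsharp_flat, hcomp, hJsym, hJ2, map_sub, map_add, map_smul, hJ2,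
    LinearMap.sub_apply, LinearMap.add_apply, LinearMap.smul_apply,
    LinearMap.map_add, LinearMap.map_sub, LinearMap.map_smul,
    smul_eq_mul, map_smul]
  field_simp
  ring_nf
  linear_combination 2 * hgsymm Y (J X) + 2 * hJsym X Y + (p ^ 2 + 4 * q) * hgsymm X b + p * hgsymm X Y
end

section
/- Let V be a finite-dimensional real vector space, g a nondegenerate symmetric bilinear form on V, and J : V → V an arbitrary g-symmetric linear map. For any real numbers p, q, define J̌ : V ⊕ V* → V ⊕ V* by J̌(X, α) := (J X + (−J² + p J + q I)(♯_g α), ♭_g(X) − J*(α) + p α). Then J̌² = p J̌ + q Id on V ⊕ V*. -/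
/-- For an arbitrary `g`-symmetric `J` on a finite-dimensional `V`
with nondegenerate symmetric `g`, and any reals `p q`, the map
`J̌(X, α) := (J X + (-J² + p J + q I)(♯_g α), ♭_g X - J* α + p α)`
satisfies `J̌² = p J̌ + q Id` on `V ⊕ V*`. -/
theorem generalized_metallic_from_arbitrary_J
    (V : Type*) [AddCommGroup V] [Module ℝ V] [FiniteDimensional ℝ V]
    (g : LinearMap.BilinForm ℝ V) (hgsymm : ∀ X Y : V, g X Y = g Y X)
    (hgnd : ∀ X : V, (∀ Y : V, g X Y = 0) → X = 0)
    (sharp : Module.Dual ℝ V →ₗ[ℝ] V)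
    (hsharp_flat : ∀ X : V, sharp (g X) = X)
    (hflat_sharp : ∀ α : Module.Dual ℝ V, g (sharp α) = α)
    (J : Module.End ℝ V)
    (hJsym : ∀ X Y : V, g (J X) Y = g X (J Y))
    (p q : ℝ)
    (Jcheck : V × Module.Dual ℝ V → V × Module.Dual ℝ V)
    (hJcheck : ∀ σ : V × Module.Dual ℝ V,
      Jcheck σ = (J σ.1 + (-(J * J) + p • J + q • (1 : Module.End ℝ V)) (sharp σ.2),
        g σ.1 - σ.2 ∘ₗ (J : V →ₗ[ℝ] V) + p • σ.2)) :
    ∀ σ : V × Module.Dual ℝ V, Jcheck (Jcheck σ) = p • Jcheck σ + q • σ := by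
  intro σ
  obtain ⟨X, α⟩ := σ
  set A : Module.End ℝ V := -(J * J) + p • J + q • (1 : Module.End ℝ V) with hA
  have hAapp : ∀ Z : V, A Z = -(J (J Z)) + p • J Z + q • Z := by
    intro Z
    simp [hA, Module.End.mul_apply]
  have hsharpJ : ∀ β : Module.Dual ℝ V,
      sharp (β ∘ₗ (J : V →ₗ[ℝ] V)) = J (sharp β) := by
    intro β
    have h : g (J (sharp β)) = β ∘ₗ (J : V →ₗ[ℝ] V) := by
      ext Y
      simp only [LinearMap.comp_apply]
      rw [hJsym, hflat_sharp β]
    rw [← h, hsharp_flat]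
  have hJA : ∀ Z : V, J (A Z) = A (J Z) := by
    intro Z
    simp [hAapp, map_add, map_smul, map_neg]
  have hAsym : ∀ Z Y : V, g (A Z) Y = g Z (A Y) := by
    intro Z Y
    simp only [hAapp, map_add, map_neg, map_smul, LinearMap.add_apply,
      LinearMap.neg_apply, LinearMap.smul_apply, smul_eq_mul]
    simp only [hJsym]
  simp only [hJcheck]
  refine Prod.ext ?_ ?_
  · -- first component
    simp only [Prod.fst_add, Prod.smul_fst, map_add, map_sub, map_smul, hsharp_flat, hsharpJ]
    rw [hJA (sharp α), hAapp X]
    module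
  · -- second component
    ext Y
    have hgA : g (A (sharp α)) Y = α (A Y) := by
      rw [hAsym, hflat_sharp α]
    simp only [LinearMap.add_apply, LinearMap.sub_apply, LinearMap.smul_apply,
      LinearMap.comp_apply, map_add, smul_eq_mul, Prod.smul_snd, Prod.fst_add,
      Prod.snd_add]
    rw [hgA, hJsym, hAapp Y]
    simp only [map_add, map_neg, map_smul, smul_eq_mul]
    ring
end

section
/- Let V be a finite-dimensional real vector space, g a nondegenerate symmetric bilinear form on V, and J : V → V an arbitrary g-symmetric linear map. For any real numbers p, q, define J̌ : V ⊕ V* → V ⊕ V* by J̌(X, α) := (J X + (−J² + p J + q I)(♯_g α), ♭_g(X) − J*(α) + p α), and define the symmetric bilinear form ǧ on V ⊕ V* by ǧ(X + α, Y + β) := g(X, Y) + ((p²+4q)/4) g(♯_g α, ♯_g β) + (p/4)(α(Y) + β(X)) − (1/2)(α(J Y) + β(J X)). Then J̌ is ǧ-symmetric: ǧ(J̌(X+α), Y+β) = ǧ(X+α, J̌(Y+β)) for all X, Y ∈ V and α, β ∈ V*. -/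
/-- For an arbitrary `g`-symmetric `J` on a finite-dimensional `V`
with nondegenerate symmetric `g`, and any reals `p q`, the generalized metallic
structure `J̌` is symmetric with respect to the generalized metric `ǧ`. -/
theorem generalized_metallic_check_symmetric
    (V : Type*) [AddCommGroup V] [Module ℝ V] [FiniteDimensional ℝ V]
    (g : LinearMap.BilinForm ℝ V) (hgsymm : ∀ X Y : V, g X Y = g Y X)
    (hgnd : ∀ X : V, (∀ Y : V, g X Y = 0) → X = 0)
    (sharp : Module.Dual ℝ V →ₗ[ℝ] V)
    (hsharp_flat : ∀ X : V, sharp (g X) = X)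
    (hflat_sharp : ∀ α : Module.Dual ℝ V, g (sharp α) = α)
    (J : Module.End ℝ V)
    (hJsym : ∀ X Y : V, g (J X) Y = g X (J Y))
    (p q : ℝ)
    (Jcheck : V × Module.Dual ℝ V → V × Module.Dual ℝ V)
    (hJcheck : ∀ σ : V × Module.Dual ℝ V,
      Jcheck σ = (J σ.1 + (-(J * J) + p • J + q • (1 : Module.End ℝ V)) (sharp σ.2),
        g σ.1 - σ.2 ∘ₗ (J : V →ₗ[ℝ] V) + p • σ.2))
    (gcheck : V × Module.Dual ℝ V → V × Module.Dual ℝ V → ℝ)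
    (hgcheck : ∀ σ τ : V × Module.Dual ℝ V,
      gcheck σ τ = g σ.1 τ.1 + ((p ^ 2 + 4 * q) / 4) * g (sharp σ.2) (sharp τ.2) +
        (p / 4) * (σ.2 τ.1 + τ.2 σ.1) - (1 / 2) * (σ.2 (J τ.1) + τ.2 (J σ.1))) :
    ∀ σ τ : V × Module.Dual ℝ V, gcheck (Jcheck σ) τ = gcheck σ (Jcheck τ) := by
  have hcomp : ∀ γ : Module.Dual ℝ V, ((γ ∘ₗ (J : V →ₗ[ℝ] V)) : Module.Dual ℝ V) = g (J (sharp γ)) := by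
    intro γ
    ext Y
    simp [hJsym, hflat_sharp γ]
  rintro ⟨X, α⟩ ⟨Y, β⟩
  have hα : α = g (sharp α) := (hflat_sharp α).symm
  have hβ : β = g (sharp β) := (hflat_sharp β).symm
  rw [hJcheck, hJcheck, hgcheck, hgcheck]
  simp only [hcomp, map_add, map_sub, map_smul, hsharp_flat, LinearMap.add_apply,
    LinearMap.sub_apply, LinearMap.smul_apply, Module.End.mul_apply, Module.End.one_apply,
    LinearMap.neg_apply, map_neg, smul_eq_mul]
  rw [hα, hβ]
  set a := sharp α
  set b := sharp β
  simp only [hsharp_flat]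
  simp only [hJsym]
  have sw0 : ∀ x y : V, g y x = g x y := fun x y => hgsymm y x
  have sw1 : ∀ x y : V, g y (J x) = g x (J y) := fun x y => (hgsymm y (J x)).trans (hJsym x y)
  have sw2 : ∀ x y : V, g y (J (J x)) = g x (J (J y)) := fun x y =>
    (hgsymm y _).trans (by rw [hJsym, hJsym])
  have sw3 : ∀ x y : V, g y (J (J (J x))) = g x (J (J (J y))) := fun x y =>
    (hgsymm y _).trans (by rw [hJsym, hJsym, hJsym])
  simp only [sw0 X Y, sw1 X Y, sw2 X Y, sw3 X Y, sw0 X b, sw1 X b, sw2 X b, sw3 X b,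
    sw0 a Y, sw1 a Y, sw2 a Y, sw3 a Y, sw0 a b, sw1 a b, sw2 a b, sw3 a b]
  ring
end

section
/- Let V be a finite-dimensional real vector space, g a nondegenerate symmetric bilinear form on V, and J : V → V an arbitrary g-symmetric linear map. For any real numbers p, q, define J̌ : V ⊕ V* → V ⊕ V* by J̌(X, α) := (J X + (−J² + p J + q I)(♯_g α), ♭_g(X) − J*(α) + p α), and let (·,·) be the natural symplectic pairing on V ⊕ V* given by (X + α, Y + β) := −(1/2)(α(Y) − β(X)). Then (J̌(X+α), Y+β) + (X+α, J̌(Y+β)) = p · (X+α, Y+β) for all X, Y ∈ V and α, β ∈ V*. In particular, for p = 0 the map J̌ is anti-calibrated with respect to (·,·). -/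
/-- For an arbitrary `g`-symmetric `J` on a finite-dimensional `V`
with nondegenerate symmetric `g`, and any reals `p q`, the generalized metallic
structure `J̌` satisfies `(J̌ σ, τ) + (σ, J̌ τ) = p (σ, τ)` for the natural
symplectic pairing `(X + α, Y + β) = -(1/2)(α Y - β X)`; in particular for
`p = 0` the map `J̌` is anti-calibrated. -/
theorem generalized_metallic_anticalibrated
    (V : Type*) [AddCommGroup V] [Module ℝ V] [FiniteDimensional ℝ V]
    (g : LinearMap.BilinForm ℝ V) (hgsymm : ∀ X Y : V, g X Y = g Y X)
    (hgnd : ∀ X : V, (∀ Y : V, g X Y = 0) → X = 0)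
    (sharp : Module.Dual ℝ V →ₗ[ℝ] V)
    (hsharp_flat : ∀ X : V, sharp (g X) = X)
    (hflat_sharp : ∀ α : Module.Dual ℝ V, g (sharp α) = α)
    (J : Module.End ℝ V)
    (hJsym : ∀ X Y : V, g (J X) Y = g X (J Y))
    (p q : ℝ)
    (Jcheck : V × Module.Dual ℝ V → V × Module.Dual ℝ V)
    (hJcheck : ∀ σ : V × Module.Dual ℝ V,
      Jcheck σ = (J σ.1 + (-(J * J) + p • J + q • (1 : Module.End ℝ V)) (sharp σ.2),
        g σ.1 - σ.2 ∘ₗ (J : V →ₗ[ℝ] V) + p • σ.2))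
    (ω : V × Module.Dual ℝ V → V × Module.Dual ℝ V → ℝ)
    (hω : ∀ σ τ : V × Module.Dual ℝ V,
      ω σ τ = -(1 / 2) * (σ.2 τ.1 - τ.2 σ.1)) :
    (∀ σ τ : V × Module.Dual ℝ V,
      ω (Jcheck σ) τ + ω σ (Jcheck τ) = p * ω σ τ) ∧
    (p = 0 → ∀ σ τ : V × Module.Dual ℝ V,
      ω (Jcheck σ) τ + ω σ (Jcheck τ) = 0) := by
  have key : ∀ σ τ : V × Module.Dual ℝ V,
      ω (Jcheck σ) τ + ω σ (Jcheck τ) = p * ω σ τ := by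
    intro σ τ
    obtain ⟨X, α⟩ := σ; obtain ⟨Y, β⟩ := τ
    have hbg : ∀ (b : Module.Dual ℝ V) (v : V), b v = g (sharp b) v :=
      fun b v => by rw [hflat_sharp]
    have h2 : ∀ a b : Module.Dual ℝ V,
        b ((J * J) (sharp a)) = a ((J * J) (sharp b)) := by
      intro a b
      rw [hbg b, hbg a, Module.End.mul_apply, Module.End.mul_apply,
        hgsymm (sharp b) (J (J (sharp a))), hJsym, hJsym]
    have h1 : ∀ a b : Module.Dual ℝ V,
        b (J (sharp a)) = a (J (sharp b)) := by
      intro a b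
      rw [hbg b, hbg a, hgsymm (sharp b) (J (sharp a)), hJsym]
    have h0 : ∀ a b : Module.Dual ℝ V, b (sharp a) = a (sharp b) := by
      intro a b
      rw [hbg b, hbg a, hgsymm]
    rw [hJcheck, hJcheck, hω, hω, hω]
    simp only [map_add, map_sub, map_smul, map_neg, LinearMap.add_apply,
      LinearMap.sub_apply, LinearMap.smul_apply, LinearMap.neg_apply,
      Module.End.one_apply, LinearMap.coe_comp, Function.comp_apply, smul_eq_mul]
    rw [hgsymm X Y, h2 α β, h1 α β, h0 α β]
    ring
  exact ⟨key, fun hp σ τ => by rw [key, hp, zero_mul]⟩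
end

section
/- Let V be a real vector space, g a symmetric bilinear form on V, and J : V → V a g-symmetric linear map with J² = p J + q I for real numbers p, q. Define Ĵ' : V ⊕ V* → V ⊕ V* by Ĵ'(X, α) := (−J X + p X, ♭_g(X) + J*(α)). Then Ĵ'² = p Ĵ' + q Id on V ⊕ V*. -/
/-- If `J` is `g`-symmetric with `J² = p J + q I`, then
`Ĵ'(X, α) := (-J X + p X, ♭_g X + J* α)` satisfies `Ĵ'² = p Ĵ' + q Id`. -/
theorem generalized_metallic_prime
    (V : Type*) [AddCommGroup V] [Module ℝ V]
    (g : LinearMap.BilinForm ℝ V) (hgsymm : ∀ X Y : V, g X Y = g Y X)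
    (J : Module.End ℝ V)
    (hJsym : ∀ X Y : V, g (J X) Y = g X (J Y))
    (p q : ℝ) (hJ : J ^ 2 = p • J + q • (1 : Module.End ℝ V))
    (Jhat' : V × Module.Dual ℝ V → V × Module.Dual ℝ V)
    (hJhat' : ∀ σ : V × Module.Dual ℝ V,
      Jhat' σ = (-(J σ.1) + p • σ.1, g σ.1 + σ.2 ∘ₗ (J : V →ₗ[ℝ] V))) :
    ∀ σ : V × Module.Dual ℝ V, Jhat' (Jhat' σ) = p • Jhat' σ + q • σ := by
  have hJ2 : ∀ X : V, J (J X) = p • J X + q • X := by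
    intro X
    have := congrFun (congrArg DFunLike.coe hJ) X
    simpa [pow_two] using this
  rintro ⟨X, α⟩
  rw [hJhat', hJhat']
  refine Prod.ext ?_ ?_
  · dsimp only [Prod.fst, Prod.smul_fst, Prod.fst_add]
    simp [hJ2, smul_smul]
    module
  · dsimp only [Prod.snd, Prod.smul_snd, Prod.snd_add]
    ext Y
    simp [hJ2, hJsym]
    ring
end

section
/- Let V be a finite-dimensional real vector space, g a nondegenerate symmetric bilinear form on V, and J : V → V an arbitrary g-symmetric linear map. For any real numbers p, q, define J̌' : V ⊕ V* → V ⊕ V* by J̌'(X, α) := (−J X + p X + (−J² + p J + q I)(♯_g α), ♭_g(X) + J*(α)). Then J̌'² = p J̌' + q Id on V ⊕ V*. Moreover, if J itself satisfies J² = p J + q I, then J̌'(X, α) = (−J X + p X, ♭_g(X) + J*(α)). -/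
/-- For an arbitrary `g`-symmetric `J` on a finite-dimensional `V`
with nondegenerate symmetric `g`, and any reals `p q`, the map
`J̌'(X, α) := (-J X + p X + (-J² + p J + q I)(♯_g α), ♭_g X + J* α)`
satisfies `J̌'² = p J̌' + q Id`; and if `J² = p J + q I` then
`J̌'(X, α) = (-J X + p X, ♭_g X + J* α)`. -/
theorem generalized_metallic_check_prime
    (V : Type*) [AddCommGroup V] [Module ℝ V] [FiniteDimensional ℝ V]
    (g : LinearMap.BilinForm ℝ V) (hgsymm : ∀ X Y : V, g X Y = g Y X)
    (hgnd : ∀ X : V, (∀ Y : V, g X Y = 0) → X = 0)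
    (sharp : Module.Dual ℝ V →ₗ[ℝ] V)
    (hsharp_flat : ∀ X : V, sharp (g X) = X)
    (hflat_sharp : ∀ α : Module.Dual ℝ V, g (sharp α) = α)
    (J : Module.End ℝ V)
    (hJsym : ∀ X Y : V, g (J X) Y = g X (J Y))
    (p q : ℝ)
    (Jcheck' : V × Module.Dual ℝ V → V × Module.Dual ℝ V)
    (hJcheck' : ∀ σ : V × Module.Dual ℝ V,
      Jcheck' σ = (-(J σ.1) + p • σ.1 +
          (-(J * J) + p • J + q • (1 : Module.End ℝ V)) (sharp σ.2),
        g σ.1 + σ.2 ∘ₗ (J : V →ₗ[ℝ] V))) :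
    (∀ σ : V × Module.Dual ℝ V, Jcheck' (Jcheck' σ) = p • Jcheck' σ + q • σ) ∧
    (J ^ 2 = p • J + q • (1 : Module.End ℝ V) →
      ∀ σ : V × Module.Dual ℝ V,
        Jcheck' σ = (-(J σ.1) + p • σ.1, g σ.1 + σ.2 ∘ₗ (J : V →ₗ[ℝ] V))) := by
  have hgJ : ∀ X : V, g (J X) = (g X) ∘ₗ (J : V →ₗ[ℝ] V) := by
    intro X; ext Y; exact hJsym X Y
  have hsJ : ∀ α : Module.Dual ℝ V, sharp (α ∘ₗ (J : V →ₗ[ℝ] V)) = J (sharp α) := by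
    intro α
    have : α ∘ₗ (J : V →ₗ[ℝ] V) = g (J (sharp α)) := by
      rw [hgJ, hflat_sharp]
    rw [this, hsharp_flat]
  constructor
  · intro σ
    obtain ⟨X, α⟩ := σ
    rw [hJcheck', hJcheck']
    dsimp only
    simp only [Prod.mk.injEq, Prod.smul_mk, Prod.mk_add_mk]
    constructor
    · simp only [map_add, map_smul, map_neg, hsharp_flat, hsJ,
        LinearMap.add_apply, LinearMap.neg_apply, LinearMap.smul_apply,
        Module.End.mul_apply, Module.End.one_apply, smul_add, smul_neg,
        smul_smul, neg_add, neg_neg]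
      module
    · simp only [map_add, map_smul, map_neg, hgJ, hflat_sharp,
        LinearMap.add_comp, LinearMap.neg_comp, LinearMap.smul_comp,
        LinearMap.add_apply, LinearMap.neg_apply, LinearMap.smul_apply,
        Module.End.mul_apply, Module.End.one_apply, smul_add, smul_neg,
        neg_add, neg_neg]
      module
  · intro hJ σ
    have hB : -(J * J) + p • J + q • (1 : Module.End ℝ V) = 0 := by
      rw [← sq, hJ]; abel
    rw [hJcheck', hB]
    simp
end

section
/- Let V be a finite-dimensional real vector space, g a nondegenerate symmetric bilinear form on V, and J : V → V an arbitrary g-symmetric linear map. Let p, q be real numbers with p² + 4q < 0. Define J̌ : V ⊕ V* → V ⊕ V* by J̌(X, α) := (J X + (−J² + p J + q I)(♯_g α), ♭_g(X) − J*(α) + p α), and the symmetric bilinear form ǧ(X + α, Y + β) := g(X, Y) + ((p²+4q)/4) g(♯_g α, ♯_g β) + (p/4)(α(Y) + β(X)) − (1/2)(α(J Y) + β(J X)). Then J̌_± := ±((2/√(−p²−4q)) J̌ − (p/√(−p²−4q)) Id) satisfy J̌_±² = −Id and are ǧ-symmetric: ǧ(J̌_± σ, τ) = ǧ(σ, J̌_±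 τ) for all σ, τ ∈ V ⊕ V*; i.e. J̌_± are generalized Norden structures with respect to ǧ. -/
/-- For an arbitrary `g`-symmetric `J` on a finite-dimensional `V`
with nondegenerate symmetric `g`, and reals `p q` with `p² + 4q < 0`, the maps
`J̌_± := ±((2/√(-p²-4q)) J̌ - (p/√(-p²-4q)) Id)` are generalized Norden structures
with respect to `ǧ`: they square to `-Id` and are `ǧ`-symmetric. -/
theorem generalized_norden_structures
    (V : Type*) [AddCommGroup V] [Module ℝ V] [FiniteDimensional ℝ V]
    (g : LinearMap.BilinForm ℝ V) (hgsymm : ∀ X Y : V, g X Y = g Y X)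
    (hgnd : ∀ X : V, (∀ Y : V, g X Y = 0) → X = 0)
    (sharp : Module.Dual ℝ V →ₗ[ℝ] V)
    (hsharp_flat : ∀ X : V, sharp (g X) = X)
    (hflat_sharp : ∀ α : Module.Dual ℝ V, g (sharp α) = α)
    (J : Module.End ℝ V)
    (hJsym : ∀ X Y : V, g (J X) Y = g X (J Y))
    (p q : ℝ) (hpq : p ^ 2 + 4 * q < 0)
    (Jcheck : V × Module.Dual ℝ V → V × Module.Dual ℝ V)
    (hJcheck : ∀ σ : V × Module.Dual ℝ V,
      Jcheck σ = (J σ.1 + (-(J * J) + p • J + q • (1 : Module.End ℝ V)) (sharp σ.2),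
        g σ.1 - σ.2 ∘ₗ (J : V →ₗ[ℝ] V) + p • σ.2))
    (gcheck : V × Module.Dual ℝ V → V × Module.Dual ℝ V → ℝ)
    (hgcheck : ∀ σ τ : V × Module.Dual ℝ V,
      gcheck σ τ = g σ.1 τ.1 + ((p ^ 2 + 4 * q) / 4) * g (sharp σ.2) (sharp τ.2) +
        (p / 4) * (σ.2 τ.1 + τ.2 σ.1) - (1 / 2) * (σ.2 (J τ.1) + τ.2 (J σ.1)))
    (Jcp Jcm : V × Module.Dual ℝ V → V × Module.Dual ℝ V)
    (hJcp : ∀ σ : V × Module.Dual ℝ V,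
      Jcp σ = (2 / Real.sqrt (-(p ^ 2) - 4 * q)) • Jcheck σ -
        (p / Real.sqrt (-(p ^ 2) - 4 * q)) • σ)
    (hJcm : ∀ σ : V × Module.Dual ℝ V,
      Jcm σ = -((2 / Real.sqrt (-(p ^ 2) - 4 * q)) • Jcheck σ -
        (p / Real.sqrt (-(p ^ 2) - 4 * q)) • σ)) :
    (∀ σ : V × Module.Dual ℝ V, Jcp (Jcp σ) = -σ) ∧
    (∀ σ : V × Module.Dual ℝ V, Jcm (Jcm σ) = -σ) ∧
    (∀ σ τ : V × Module.Dual ℝ V, gcheck (Jcp σ) τ = gcheck σ (Jcp τ)) ∧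
    (∀ σ τ : V × Module.Dual ℝ V, gcheck (Jcm σ) τ = gcheck σ (Jcm τ)) := by
  set s := Real.sqrt (-(p ^ 2) - 4 * q) with hs
  have hpos : (0:ℝ) < -(p ^ 2) - 4 * q := by nlinarith
  have hspos : 0 < s := Real.sqrt_pos.mpr hpos
  have hsne : s ≠ 0 := ne_of_gt hspos
  have hs2 : s * s = -(p ^ 2) - 4 * q := Real.mul_self_sqrt (le_of_lt hpos)
  have hs2' : s ^ 2 = -(p ^ 2) - 4 * q := by rw [pow_two]; exact hs2
  -- sharp of α ∘ J
  have hsharpJ : ∀ α : Module.Dual ℝ V, sharp (α ∘ₗ (J : V →ₗ[ℝ] V)) = J (sharp α) := by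
    intro α
    have h1 : (α ∘ₗ (J : V →ₗ[ℝ] V)) = g (J (sharp α)) := by
      ext Y
      rw [LinearMap.comp_apply, hJsym, hflat_sharp]
    rw [h1, hsharp_flat]
  -- linearity of Jcheck
  have hlin : ∀ (a b : ℝ) (σ τ : V × Module.Dual ℝ V),
      Jcheck (a • σ - b • τ) = a • Jcheck σ - b • Jcheck τ := by
    intro a b σ τ
    simp only [hJcheck]
    refine Prod.ext ?_ ?_
    · simp [Prod.smul_fst, Prod.smul_snd, map_sub, map_smul, smul_sub]
      abel
    · ext Y
      simp [Prod.smul_fst, Prod.smul_snd, map_sub, map_smul, smul_sub]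
      ring
  -- Jcheck squared
  have hA : ∀ σ : V × Module.Dual ℝ V, Jcheck (Jcheck σ) = p • Jcheck σ + q • σ := by
    intro σ
    obtain ⟨X, α⟩ := σ
    simp only [hJcheck]
    refine Prod.ext ?_ ?_
    · simp only [map_add, map_sub, map_neg, map_smul, hsharp_flat, hsharpJ, LinearMap.add_apply,
        LinearMap.neg_apply, LinearMap.smul_apply, Module.End.mul_apply, Module.End.one_apply,
        Prod.smul_fst, Prod.fst_add, Prod.smul_snd, Prod.snd_add]
      module
    · ext Y
      simp only [map_add, map_sub, map_neg, map_smul, hsharp_flat, hsharpJ, LinearMap.add_apply,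
        LinearMap.neg_apply, LinearMap.smul_apply, Module.End.mul_apply, Module.End.one_apply,
        LinearMap.comp_apply, LinearMap.sub_apply, smul_eq_mul,
        Prod.smul_fst, Prod.fst_add, Prod.smul_snd, Prod.snd_add]
      simp only [hJsym, hflat_sharp]
      ring
  -- squaring
  have hsqp : ∀ σ : V × Module.Dual ℝ V, Jcp (Jcp σ) = -σ := by
    intro σ
    rw [hJcp, hJcp, hlin, hA]
    match_scalars
    · field_simp
      ring
    · field_simp
      rw [hs2']
      ring
  have hneg : ∀ (a b : ℝ) (σ τ : V × Module.Dual ℝ V),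
      Jcheck (-(a • σ - b • τ)) = -(a • Jcheck σ - b • Jcheck τ) := by
    intro a b σ τ
    rw [neg_sub, hlin, neg_sub]
  have hsqm : ∀ σ : V × Module.Dual ℝ V, Jcm (Jcm σ) = -σ := by
    intro σ
    rw [hJcm, hJcm, hneg, hA]
    match_scalars
    · field_simp
      ring
    · field_simp
      rw [hs2']
      ring
  -- gcheck bilinearity
  have hglin1 : ∀ (a b : ℝ) (σ σ' τ : V × Module.Dual ℝ V),
      gcheck (a • σ - b • σ') τ = a * gcheck σ τ - b * gcheck σ' τ := by
    intro a b σ σ' τ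
    simp only [hgcheck, Prod.fst_sub, Prod.snd_sub, Prod.smul_fst, Prod.smul_snd,
      map_sub, map_smul, LinearMap.sub_apply, LinearMap.smul_apply, smul_eq_mul]
    ring
  have hglin2 : ∀ (a b : ℝ) (σ τ τ' : V × Module.Dual ℝ V),
      gcheck σ (a • τ - b • τ') = a * gcheck σ τ - b * gcheck σ τ' := by
    intro a b σ τ τ'
    simp only [hgcheck, Prod.fst_sub, Prod.snd_sub, Prod.smul_fst, Prod.smul_snd,
      map_sub, map_smul, LinearMap.sub_apply, LinearMap.smul_apply, smul_eq_mul]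
    ring
  -- dual pairing helpers
  have d0 : ∀ (u : V) (γ : Module.Dual ℝ V), g u (sharp γ) = γ u := by
    intro u γ
    rw [hgsymm, hflat_sharp]
  have d1 : ∀ (u : V) (γ : Module.Dual ℝ V), g u (J (sharp γ)) = γ (J u) := by
    intro u γ
    rw [← hJsym, d0]
  have d2 : ∀ (u : V) (γ : Module.Dual ℝ V), g u (J (J (sharp γ))) = γ (J (J u)) := by
    intro u γ
    rw [← hJsym, ← hJsym, d0]
  have d3 : ∀ (u : V) (γ : Module.Dual ℝ V), g u (J (J (J (sharp γ)))) = γ (J (J (J u))) := by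
    intro u γ
    rw [← hJsym, ← hJsym, ← hJsym, d0]
  -- gcheck-symmetry of Jcheck
  have hB : ∀ σ τ : V × Module.Dual ℝ V, gcheck (Jcheck σ) τ = gcheck σ (Jcheck τ) := by
    intro σ τ
    obtain ⟨X, α⟩ := σ
    obtain ⟨Y, β⟩ := τ
    have f0 : β (sharp α) = α (sharp β) := by
      rw [← d0 (sharp α) β, ← d0 (sharp β) α]
      exact hgsymm _ _
    have f1 : β (J (sharp α)) = α (J (sharp β)) := by
      rw [← d1 (sharp α) β, ← d1 (sharp β) α, ← hJsym, hgsymm]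
    have f2 : β (J (J (sharp α))) = α (J (J (sharp β))) := by
      rw [← d2 (sharp α) β, ← d2 (sharp β) α, ← hJsym, ← hJsym, hgsymm]
    have f3 : β (J (J (J (sharp α)))) = α (J (J (J (sharp β)))) := by
      rw [← d3 (sharp α) β, ← d3 (sharp β) α, ← hJsym, ← hJsym, ← hJsym, hgsymm]
    have fg : (g Y) X = (g X) Y := hgsymm Y X
    have fg1 : (g Y) (J X) = (g X) (J Y) := by
      rw [← hJsym, hgsymm]
    simp only [hJcheck, hgcheck, map_add, map_sub, map_neg, map_smul, hsharp_flat, hsharpJ,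
      LinearMap.add_apply, LinearMap.sub_apply, LinearMap.neg_apply, LinearMap.smul_apply,
      Module.End.mul_apply, Module.End.one_apply, LinearMap.comp_apply, smul_eq_mul,
      hJsym, hflat_sharp, d0, d1, d2, d3]
    rw [f0, f1, f2, f3, fg, fg1]
    ring
  exact ⟨hsqp, hsqm,
    fun σ τ => by rw [hJcp σ, hJcp τ, hglin1, hglin2, hB],
    fun σ τ => by rw [hJcm σ, hJcm τ, neg_sub, neg_sub, hglin1, hglin2, hB]⟩
end

section
/- Let V be a finite-dimensional real vector space, g a nondegenerate symmetric bilinear form on V, and J : V → V a g-symmetric linear map with J² = −I (a Norden structure). Define J̃ : V ⊕ V* → V ⊕ V* by J̃(X, α) := (J X, ♭_g(X) − J*(α)), and the bilinear form g̃ on V ⊕ V* by g̃(X + α, Y + β) := g(X, Y) + (1/2) g(J X, ♯_g β) + (1/2) g(♯_g α, J Y) + g(♯_g α, ♯_g β). Then for any real numbers a, b, the map J̃_{a,b} := a J̃ + b Id satisfies J̃_{a,b}² = p J̃_{a,b} + q Id with p = 2b and q = −(a² + b²), and is g̃-symmetric: g̃(J̃_{a,b} σ, τ) = g̃(σ, J̃_{a,b}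 τ) for all σ, τ ∈ V ⊕ V*. -/
/-- If `(J, g)` is a Norden structure on a finite-dimensional `V`
(`J` `g`-symmetric, `J² = -I`, `g` nondegenerate symmetric), then for any reals
`a b`, the map `J̃_{a,b} := a J̃ + b Id` on `V ⊕ V*` satisfies
`J̃_{a,b}² = 2b J̃_{a,b} - (a² + b²) Id` and is `g̃`-symmetric, where
`J̃(X, α) = (J X, ♭_g X - J* α)` and
`g̃(X + α, Y + β) = g(X,Y) + ½ g(J X, ♯β) + ½ g(♯α, J Y) + g(♯α, ♯β)`. -/
theorem generalized_metallic_norden_family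
    (V : Type*) [AddCommGroup V] [Module ℝ V] [FiniteDimensional ℝ V]
    (g : LinearMap.BilinForm ℝ V) (hgsymm : ∀ X Y : V, g X Y = g Y X)
    (hgnd : ∀ X : V, (∀ Y : V, g X Y = 0) → X = 0)
    (sharp : Module.Dual ℝ V →ₗ[ℝ] V)
    (hsharp_flat : ∀ X : V, sharp (g X) = X)
    (hflat_sharp : ∀ α : Module.Dual ℝ V, g (sharp α) = α)
    (J : Module.End ℝ V)
    (hJsym : ∀ X Y : V, g (J X) Y = g X (J Y))
    (hJ : J ^ 2 = -(1 : Module.End ℝ V))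
    (Jtilde : V × Module.Dual ℝ V → V × Module.Dual ℝ V)
    (hJtilde : ∀ σ : V × Module.Dual ℝ V,
      Jtilde σ = (J σ.1, g σ.1 - σ.2 ∘ₗ (J : V →ₗ[ℝ] V)))
    (gtilde : V × Module.Dual ℝ V → V × Module.Dual ℝ V → ℝ)
    (hgtilde : ∀ σ τ : V × Module.Dual ℝ V,
      gtilde σ τ = g σ.1 τ.1 + (1 / 2) * g (J σ.1) (sharp τ.2) +
        (1 / 2) * g (sharp σ.2) (J τ.1) + g (sharp σ.2) (sharp τ.2))
    (a b : ℝ)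
    (Jab : V × Module.Dual ℝ V → V × Module.Dual ℝ V)
    (hJab : ∀ σ : V × Module.Dual ℝ V, Jab σ = a • Jtilde σ + b • σ) :
    (∀ σ : V × Module.Dual ℝ V,
      Jab (Jab σ) = (2 * b) • Jab σ + (-(a ^ 2 + b ^ 2)) • σ) ∧
    (∀ σ τ : V × Module.Dual ℝ V, gtilde (Jab σ) τ = gtilde σ (Jab τ)) := by
  have hJJ : ∀ X : V, J (J X) = -X := fun X => by
    have := congrArg (fun f : Module.End ℝ V => f X) hJ
    simpa [pow_two, Module.End.mul_apply] using this
  have hcomp : ∀ X : V, (g X) ∘ₗ (J : V →ₗ[ℝ] V) = g (J X) := fun X => by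
    ext Y; simp [hJsym X Y]
  have hcomp2 : ∀ α : Module.Dual ℝ V,
      (α ∘ₗ (J : V →ₗ[ℝ] V)) ∘ₗ (J : V →ₗ[ℝ] V) = -α := fun α => by
    ext Y; simp [hJJ Y]
  have hsharpJ : ∀ α : Module.Dual ℝ V,
      sharp (α ∘ₗ (J : V →ₗ[ℝ] V)) = J (sharp α) := fun α => by
    rw [← sub_eq_zero]
    apply hgnd
    intro Y
    have h1 : g (sharp (α ∘ₗ (J : V →ₗ[ℝ] V))) Y = α (J Y) := by
      rw [hflat_sharp]; simp
    have h2 : g (J (sharp α)) Y = α (J Y) := by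
      rw [hJsym]
      have := hflat_sharp α
      calc g (sharp α) (J Y) = (g (sharp α)) (J Y) := rfl
        _ = α (J Y) := by rw [this]
    rw [map_sub, LinearMap.sub_apply, h1, h2, sub_self]
  constructor
  · intro σ
    obtain ⟨X, α⟩ := σ
    simp only [hJab, hJtilde]
    refine Prod.ext ?_ ?_
    · simp only [Prod.smul_fst, Prod.fst_add, Prod.smul_snd, Prod.snd_add]
      simp [map_add, map_smul, hJJ, smul_smul]
      module
    · simp only [Prod.smul_fst, Prod.fst_add, Prod.smul_snd, Prod.snd_add]
      simp only [smul_sub, smul_add, map_add, map_smul, LinearMap.add_comp,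
        LinearMap.sub_comp, LinearMap.smul_comp, hcomp, hcomp2]
      module
  · intro σ τ
    obtain ⟨X, α⟩ := σ
    obtain ⟨Y, β⟩ := τ
    simp only [hgtilde, hJab, hJtilde]
    simp only [Prod.smul_fst, Prod.fst_add, Prod.smul_snd, Prod.snd_add,
      smul_sub, smul_add, map_add, map_smul, map_sub, LinearMap.add_apply,
      LinearMap.sub_apply, LinearMap.smul_apply, smul_eq_mul,
      hsharp_flat, hsharpJ, hJJ, map_neg, LinearMap.neg_apply]
    simp only [hJsym, hJJ, map_neg, LinearMap.neg_apply]
    ring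
end
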